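/- Let f : ℝ → ℝ be convex with f(1) = 0, let δ > 0, N ≥ 1, and let ℓ ∈ ℝ^N with ℓ_i ≥ 0 for all i. Then: (i) every maximizer r of ∑_{i=1}^N r_i ℓ_i over Û_f satisfies r_j ≤ r_k whenever ℓ_j < ℓ_k; (ii) there exists a maximizer r* of ∑_{i=1}^N r_i ℓ_i over Û_f such that additionally r*_j = r*_k whenever ℓ_j = ℓ_k; consequently there exists a non-decreasing, non-negative function h : [0,∞) → [0,∞) with r*_i = h(ℓ_i) for all i. (A maximizer exists because Û_f is a nonempty compact subset of ℝ^N: it contains the all-ones vector and is contained in [0, N]^N.) -/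

import Mathlib

/-- Fiber-averaging sum identity. -/
lemma fiber_sum {N : ℕ} (ℓ : Fin N → ℝ) (w : Fin N → ℝ) :
    ∑ i, (∑ j ∈ Finset.univ.filter (fun j => ℓ j = ℓ i), w j) /
      ((Finset.univ.filter (fun j => ℓ j = ℓ i)).card : ℝ) = ∑ j, w j := by
  classical
  set F : Fin N → Finset (Fin N) := fun i => Finset.univ.filter (fun j => ℓ j = ℓ i) with hF
  have hmem : ∀ i, i ∈ F i := fun i => by simp [hF]
  have hcard : ∀ i, (0 : ℝ) < ((F i).card : ℝ) := fun i =>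
    Nat.cast_pos.mpr (Finset.card_pos.mpr ⟨i, hmem i⟩)
  have hFeq : ∀ {i j : Fin N}, ℓ j = ℓ i → F j = F i := by
    intro i j h
    apply Finset.filter_congr
    intro x _
    simp [h]
  calc ∑ i, (∑ j ∈ F i, w j) / ((F i).card : ℝ)
      = ∑ i, ∑ j, (if ℓ j = ℓ i then w j / ((F i).card : ℝ) else 0) := by
        apply Finset.sum_congr rfl; intro i _
        rw [Finset.sum_div, Finset.sum_filter]
    _ = ∑ j, ∑ i, (if ℓ j = ℓ i then w j / ((F i).card : ℝ) else 0) := Finset.sum_comm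
    _ = ∑ j, w j := by
        apply Finset.sum_congr rfl; intro j _
        have key : ∀ i, (if ℓ j = ℓ i then w j / ((F i).card : ℝ) else 0)
            = (if ℓ i = ℓ j then w j / ((F j).card : ℝ) else 0) := by
          intro i
          by_cases h : ℓ j = ℓ i
          · rw [if_pos h, if_pos h.symm, hFeq h]
          · rw [if_neg h, if_neg (fun h' => h h'.symm)]
        simp_rw [key, ← Finset.sum_filter]
        rw [Finset.sum_const, nsmul_eq_mul]
        rw [show Finset.univ.filter (fun i => ℓ i = ℓ j) = F j from rfl]
        rw [mul_comm]
        exact div_mul_cancel₀ _ (ne_of_gt (hcard j))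

/-- The empirical uncertainty set
`Û_f = { r : (1/N)∑ f(rᵢ) ≤ δ, (1/N)∑ rᵢ = 1, rᵢ ≥ 0 }`. -/
def UfEmp (N : ℕ) (f : ℝ → ℝ) (δ : ℝ) : Set (Fin N → ℝ) :=
  {r | (1 / (N : ℝ)) * ∑ i, f (r i) ≤ δ ∧ (1 / (N : ℝ)) * ∑ i, r i = 1 ∧ ∀ i, 0 ≤ r i}

theorem stmt7 (f : ℝ → ℝ) (hconv : ConvexOn ℝ Set.univ f) (hf1 : f 1 = 0)
    (δ : ℝ) (hδ : 0 < δ) (N : ℕ) (hN : 1 ≤ N)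
    (ℓ : Fin N → ℝ) (hℓ : ∀ i, 0 ≤ ℓ i) :
    (∀ r ∈ UfEmp N f δ,
      (∀ r' ∈ UfEmp N f δ, ∑ i, r' i * ℓ i ≤ ∑ i, r i * ℓ i) →
      ∀ j k, ℓ j < ℓ k → r j ≤ r k) ∧
    (∃ r ∈ UfEmp N f δ,
      (∀ r' ∈ UfEmp N f δ, ∑ i, r' i * ℓ i ≤ ∑ i, r i * ℓ i) ∧
      (∀ j k, ℓ j = ℓ k → r j = r k) ∧
      ∃ h : ℝ → ℝ, MonotoneOn h (Set.Ici 0) ∧ (∀ u ∈ Set.Ici (0 : ℝ), 0 ≤ h u) ∧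
        ∀ i, r i = h (ℓ i)) := by
  classical
  have hN0 : (0 : ℝ) < N := by exact_mod_cast hN
  have hNne : (N : ℝ) ≠ 0 := ne_of_gt hN0
  -- Part (i)
  have part1 : ∀ r ∈ UfEmp N f δ,
      (∀ r' ∈ UfEmp N f δ, ∑ i, r' i * ℓ i ≤ ∑ i, r i * ℓ i) →
      ∀ j k, ℓ j < ℓ k → r j ≤ r k := by
    intro r hr hmax j k hjk
    by_contra hlt
    push_neg at hlt
    have hjk' : j ≠ k := fun h => lt_irrefl _ (h ▸ hjk)
    set σ := Equiv.swap j k with hσ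
    have hr' : (fun i => r (σ i)) ∈ UfEmp N f δ := by
      obtain ⟨h1, h2, h3⟩ := hr
      refine ⟨?_, ?_, fun i => h3 _⟩
      · have : ∑ i, f (r (σ i)) = ∑ i, f (r i) := Equiv.sum_comp σ (fun i => f (r i))
        rw [this]; exact h1
      · have : ∑ i, r (σ i) = ∑ i, r i := Equiv.sum_comp σ r
        rw [this]; exact h2
    have hle := hmax _ hr'
    set g : Fin N → ℝ := fun i => (r (σ i) - r i) * ℓ i with hg
    have hsum : ∑ i, g i = g j + g k := by
      rw [← Finset.sum_pair hjk']
      refine (Finset.sum_subset (Finset.subset_univ _) ?_).symm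
      intro x _ hx
      simp only [Finset.mem_insert, Finset.mem_singleton] at hx
      push_neg at hx
      have : σ x = x := Equiv.swap_apply_of_ne_of_ne hx.1 hx.2
      simp [hg, this]
    have hgj : g j = (r k - r j) * ℓ j := by simp [hg, hσ]
    have hgk : g k = (r j - r k) * ℓ k := by simp [hg, hσ]
    have hpos : 0 < g j + g k := by
      rw [hgj, hgk]
      have : (r k - r j) * ℓ j + (r j - r k) * ℓ k = (r j - r k) * (ℓ k - ℓ j) := by ring
      rw [this]
      exact mul_pos (sub_pos.mpr hlt) (sub_pos.mpr hjk)
    have hsplit : ∑ i, g i = (∑ i, r (σ i) * ℓ i) - ∑ i, r i * ℓ i := by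
      rw [← Finset.sum_sub_distrib]
      apply Finset.sum_congr rfl; intro i _; ring
    linarith [hsum ▸ hsplit]
  refine ⟨part1, ?_⟩
  -- continuity of f
  have hfc : Continuous f := by
    have := ConvexOn.continuousOn isOpen_univ hconv
    rw [← continuousOn_univ]
    exact this
  -- the set is compact
  have hclosed : IsClosed (UfEmp N f δ) := by
    have h1 : IsClosed {r : Fin N → ℝ | (1 / (N : ℝ)) * ∑ i, f (r i) ≤ δ} :=
      isClosed_le (continuous_const.mul (continuous_finset_sum _ fun i _ =>
        hfc.comp (continuous_apply i))) continuous_const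
    have h2 : IsClosed {r : Fin N → ℝ | (1 / (N : ℝ)) * ∑ i, r i = 1} :=
      isClosed_eq (continuous_const.mul (continuous_finset_sum _ fun i _ =>
        continuous_apply i)) continuous_const
    have h3 : IsClosed {r : Fin N → ℝ | ∀ i, 0 ≤ r i} := by
      have : {r : Fin N → ℝ | ∀ i, 0 ≤ r i} = ⋂ i, {r | 0 ≤ r i} := by
        ext r; simp
      rw [this]
      exact isClosed_iInter fun i => isClosed_le continuous_const (continuous_apply i)
    have : UfEmp N f δ = {r : Fin N → ℝ | (1 / (N : ℝ)) * ∑ i, f (r i) ≤ δ} ∩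
        ({r | (1 / (N : ℝ)) * ∑ i, r i = 1} ∩ {r | ∀ i, 0 ≤ r i}) := by
      rfl
    rw [this]
    exact h1.inter (h2.inter h3)
  have hsub : UfEmp N f δ ⊆ Set.univ.pi (fun _ : Fin N => Set.Icc (0:ℝ) N) := by
    intro r hr
    obtain ⟨_, h2, h3⟩ := hr
    intro i _
    refine ⟨h3 i, ?_⟩
    have hsumN : ∑ i, r i = (N : ℝ) := by
      field_simp at h2
      linarith [h2]
    calc r i ≤ ∑ i, r i := Finset.single_le_sum (fun i _ => h3 i) (Finset.mem_univ i)
      _ = (N : ℝ) := hsumN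
  have hcomp : IsCompact (UfEmp N f δ) :=
    IsCompact.of_isClosed_subset (isCompact_univ_pi fun _ => isCompact_Icc) hclosed hsub
  have hone : (fun _ : Fin N => (1:ℝ)) ∈ UfEmp N f δ := by
    refine ⟨?_, ?_, fun _ => zero_le_one⟩
    · simp [hf1]
      positivity
    · simp [hNne]
  obtain ⟨r, hr, hrmax⟩ := hcomp.exists_isMaxOn (f := fun r : Fin N → ℝ => ∑ i, r i * ℓ i) ⟨_, hone⟩
    ((continuous_finset_sum _ fun i _ => (continuous_apply i).mul continuous_const).continuousOn)
  rw [isMaxOn_iff] at hrmax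
  -- symmetrize r over fibers of ℓ
  set F : Fin N → Finset (Fin N) := fun i => Finset.univ.filter (fun j => ℓ j = ℓ i) with hF
  have hmemF : ∀ i, i ∈ F i := fun i => by simp [hF]
  have hcardF : ∀ i, (0 : ℝ) < ((F i).card : ℝ) := fun i =>
    Nat.cast_pos.mpr (Finset.card_pos.mpr ⟨i, hmemF i⟩)
  have hFeq : ∀ {i j : Fin N}, ℓ j = ℓ i → F j = F i := by
    intro i j h
    apply Finset.filter_congr
    intro x _
    simp [h]
  set q : Fin N → ℝ := fun i => (∑ j ∈ F i, r j) / ((F i).card : ℝ) with hq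
  obtain ⟨hr1, hr2, hr3⟩ := hr
  have hqmem : q ∈ UfEmp N f δ := by
    refine ⟨?_, ?_, ?_⟩
    · -- Jensen
      have jensen : ∀ i, f (q i) ≤ (∑ j ∈ F i, f (r j)) / ((F i).card : ℝ) := by
        intro i
        have hceq : ∑ j ∈ F i, (1 / ((F i).card : ℝ)) = 1 := by
          rw [Finset.sum_const, nsmul_eq_mul, mul_one_div]
          exact div_self (ne_of_gt (hcardF i))
        have := hconv.map_sum_le (t := F i) (w := fun _ => 1 / ((F i).card : ℝ))
          (p := fun j => r j) (fun _ _ => by positivity) hceq (fun _ _ => Set.mem_univ _)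
        simp only [smul_eq_mul] at this
        have e1 : q i = ∑ j ∈ F i, (1 / ((F i).card : ℝ)) * r j := by
          rw [hq]
          simp only
          rw [Finset.sum_div]
          apply Finset.sum_congr rfl
          intro j _; ring
        have e2 : (∑ j ∈ F i, f (r j)) / ((F i).card : ℝ)
            = ∑ j ∈ F i, (1 / ((F i).card : ℝ)) * f (r j) := by
          rw [Finset.sum_div]
          apply Finset.sum_congr rfl
          intro j _; ring
        rw [e1, e2]
        exact this
      have : ∑ i, f (q i) ≤ ∑ i, (∑ j ∈ F i, f (r j)) / ((F i).card : ℝ) :=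
        Finset.sum_le_sum fun i _ => jensen i
      have heq := fiber_sum ℓ (fun j => f (r j))
      calc (1 / (N : ℝ)) * ∑ i, f (q i)
          ≤ (1 / (N : ℝ)) * ∑ i, (∑ j ∈ F i, f (r j)) / ((F i).card : ℝ) := by
            apply mul_le_mul_of_nonneg_left this (by positivity)
        _ = (1 / (N : ℝ)) * ∑ j, f (r j) := by rw [heq]
        _ ≤ δ := hr1
    · have heq := fiber_sum ℓ r
      have : ∑ i, q i = ∑ i, r i := heq
      rw [this]; exact hr2
    · intro i
      exact div_nonneg (Finset.sum_nonneg fun j _ => hr3 j) (hcardF i).le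
  have hobj : ∑ i, q i * ℓ i = ∑ i, r i * ℓ i := by
    have e1 : ∀ i, q i * ℓ i = (∑ j ∈ F i, r j * ℓ j) / ((F i).card : ℝ) := by
      intro i
      rw [hq]
      simp only
      rw [div_mul_eq_mul_div, Finset.sum_mul]
      congr 1
      apply Finset.sum_congr rfl
      intro j hj
      have : ℓ j = ℓ i := (Finset.mem_filter.mp hj).2
      rw [this]
    simp_rw [e1]
    exact fiber_sum ℓ (fun j => r j * ℓ j)
  have hqmax : ∀ r' ∈ UfEmp N f δ, ∑ i, r' i * ℓ i ≤ ∑ i, q i * ℓ i := by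
    intro r' hr'
    rw [hobj]
    exact hrmax r' hr'
  have hqeq : ∀ j k, ℓ j = ℓ k → q j = q k := by
    intro j k h
    rw [hq]
    simp only
    rw [hFeq h.symm]
  -- monotonicity of q wrt ℓ
  have hqmono : ∀ j k, ℓ j ≤ ℓ k → q j ≤ q k := by
    intro j k h
    rcases lt_or_eq_of_le h with h | h
    · exact part1 q hqmem hqmax j k h
    · exact le_of_eq (hqeq j k h)
  have hqnonneg : ∀ i, 0 ≤ q i := hqmem.2.2
  -- construct h
  refine ⟨q, hqmem, hqmax, hqeq, ?_⟩
  set h : ℝ → ℝ := fun u =>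
    if hne : (Finset.univ.filter (fun i => ℓ i ≤ u)).Nonempty
    then (Finset.univ.filter (fun i => ℓ i ≤ u)).sup' hne q else 0 with hh
  have hnonneg : ∀ u, 0 ≤ h u := by
    intro u
    rw [hh]
    simp only
    split
    case isTrue hne =>
      obtain ⟨i, hi⟩ := hne
      exact le_trans (hqnonneg i) (Finset.le_sup' q hi)
    case isFalse => exact le_refl 0
  refine ⟨h, ?_, fun u _ => hnonneg u, ?_⟩
  · intro u hu v hv huv
    rw [hh]
    simp only
    split
    case isTrue hne =>
      have hne' : (Finset.univ.filter (fun i => ℓ i ≤ v)).Nonempty := by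
        obtain ⟨i, hi⟩ := hne
        refine ⟨i, ?_⟩
        simp only [Finset.mem_filter, Finset.mem_univ, true_and] at hi ⊢
        linarith
      rw [dif_pos hne']
      apply Finset.sup'_le
      intro i hi
      simp only [Finset.mem_filter, Finset.mem_univ, true_and] at hi
      have : i ∈ Finset.univ.filter (fun j => ℓ j ≤ v) := by
        simp only [Finset.mem_filter, Finset.mem_univ, true_and]
        linarith
      exact Finset.le_sup' q this
    case isFalse => exact hnonneg v
  · intro i
    have hne : (Finset.univ.filter (fun j => ℓ j ≤ ℓ i)).Nonempty :=
      ⟨i, by simp⟩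
    rw [hh]
    simp only
    rw [dif_pos hne]
    apply le_antisymm
    · exact Finset.le_sup' q (by simp : i ∈ _)
    · apply Finset.sup'_le
      intro j hj
      simp only [Finset.mem_filter, Finset.mem_univ, true_and] at hj
      exact hqmono j i hj
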